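/- Let E be a complex Banach space, take p,q with 1 ≤ p ≤ q < ∞, and let T ∈ B(ℓ¹, E). Then the set {T(δ_k) : k ∈ ℕ} is (p,q)-multi-bounded in E if and only if the adjoint T' : E' → ℓ^∞ is (q,p)-summing; in that case mb_{p,q}({T(δ_k) : k ∈ ℕ}) = π_{q,p}(T'). Here (δ_k) is the standard basis of ℓ¹. -/

import Mathlib

open NormedSpace

variable {E : Type*} [NormedAddCommGroup E] [NormedSpace ℂ E]

/-- The weak `p`-summing norm `μ_{p,n}` of a tuple of functionals on `E`,
computed over the unit ball of `E`. -/
noncomputable def muPN (p : ℝ) {n : ℕ} (lam : Fin n → StrongDual ℂ E) : ℝ :=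
  sSup {r : ℝ | ∃ x : E, ‖x‖ ≤ 1 ∧ r = (∑ i, ‖lam i x‖ ^ p) ^ (1 / p)}

/-- The `(p,q)`-multi-norm of a tuple `(x₁,…,xₙ)` in `E`. -/
noncomputable def pqNorm (p q : ℝ) {n : ℕ} (x : Fin n → E) : ℝ :=
  sSup {r : ℝ | ∃ lam : Fin n → StrongDual ℂ E, muPN p lam ≤ 1 ∧
    r = (∑ i, ‖lam i (x i)‖ ^ q) ^ (1 / q)}

/-- The weak `p`-summing norm of a tuple of elements of the dual space `E'`, computed
over the unit ball of the bidual `E''` (as in the definition of summing operators). -/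
noncomputable def muDualPN (p : ℝ) {n : ℕ} (lam : Fin n → StrongDual ℂ E) : ℝ :=
  sSup {r : ℝ | ∃ Λ : StrongDual ℂ (StrongDual ℂ E), ‖Λ‖ ≤ 1 ∧ r = (∑ i, ‖Λ (lam i)‖ ^ p) ^ (1 / p)}

section helpers

variable {p q : ℝ} {n : ℕ}

private lemma rp1 {a : ℝ} (ha : 0 ≤ a) (hp : p ≠ 0) : (a ^ p) ^ (1 / p) = a := by
  rw [one_div, Real.rpow_rpow_inv ha hp]

private lemma rp2 {a : ℝ} (ha : 0 ≤ a) (hp : p ≠ 0) : (a ^ (1 / p)) ^ p = a := by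
  rw [one_div, Real.rpow_inv_rpow ha hp]

private lemma rpow_sum_le_of_le (hp : 0 < p) {a b : Fin n → ℝ}
    (ha : ∀ i, 0 ≤ a i) (hab : ∀ i, a i ≤ b i) :
    (∑ i, a i ^ p) ^ (1 / p) ≤ (∑ i, b i ^ p) ^ (1 / p) := by
  have h1 : ∑ i, a i ^ p ≤ ∑ i, b i ^ p :=
    Finset.sum_le_sum fun i _ => Real.rpow_le_rpow (ha i) (hab i) hp.le
  have h0 : (0:ℝ) ≤ ∑ i, a i ^ p :=
    Finset.sum_nonneg fun i _ => Real.rpow_nonneg (ha i) p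
  exact Real.rpow_le_rpow h0 h1 (by positivity)

private lemma rpow_sum_smul {t : ℝ} (ht : 0 ≤ t) (hp : 0 < p) {a : Fin n → ℝ}
    (ha : ∀ i, 0 ≤ a i) :
    (∑ i, (t * a i) ^ p) ^ (1 / p) = t * (∑ i, a i ^ p) ^ (1 / p) := by
  have : ∀ i, (t * a i) ^ p = t ^ p * a i ^ p := fun i => Real.mul_rpow ht (ha i)
  rw [Finset.sum_congr rfl fun i _ => this i, ← Finset.mul_sum,
    Real.mul_rpow (Real.rpow_nonneg ht p)
      (Finset.sum_nonneg fun i _ => Real.rpow_nonneg (ha i) p), rp1 ht hp.ne']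

private lemma single_le_rpow_sum (hp : 0 < p) {a : Fin n → ℝ} (ha : ∀ i, 0 ≤ a i) (i : Fin n) :
    a i ≤ (∑ j, a j ^ p) ^ (1 / p) := by
  have : a i ^ p ≤ ∑ j, a j ^ p :=
    Finset.single_le_sum (f := fun j => a j ^ p)
      (fun j _ => Real.rpow_nonneg (ha j) p) (Finset.mem_univ i)
  calc a i = (a i ^ p) ^ (1 / p) := (rp1 (ha i) hp.ne').symm
    _ ≤ (∑ j, a j ^ p) ^ (1 / p) :=
      Real.rpow_le_rpow (Real.rpow_nonneg (ha i) p) this (by positivity)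

lemma muPN_set_nonempty (lam : Fin n → StrongDual ℂ E) :
    {r : ℝ | ∃ x : E, ‖x‖ ≤ 1 ∧ r = (∑ i, ‖lam i x‖ ^ p) ^ (1 / p)}.Nonempty :=
  ⟨_, 0, by simp, rfl⟩

lemma muPN_set_bddAbove (hp : 0 < p) (lam : Fin n → StrongDual ℂ E) :
    BddAbove {r : ℝ | ∃ x : E, ‖x‖ ≤ 1 ∧ r = (∑ i, ‖lam i x‖ ^ p) ^ (1 / p)} := by
  refine ⟨(∑ i, ‖lam i‖ ^ p) ^ (1 / p), ?_⟩
  rintro r ⟨x, hx, rfl⟩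
  exact rpow_sum_le_of_le hp (fun i => norm_nonneg _)
    (fun i => le_trans ((lam i).le_opNorm x) (mul_le_of_le_one_right (norm_nonneg _) hx))

lemma le_muPN (hp : 0 < p) (lam : Fin n → StrongDual ℂ E) {x : E} (hx : ‖x‖ ≤ 1) :
    (∑ i, ‖lam i x‖ ^ p) ^ (1 / p) ≤ muPN p lam :=
  le_csSup (muPN_set_bddAbove hp lam) ⟨x, hx, rfl⟩

lemma muPN_nonneg (hp : 0 < p) (lam : Fin n → StrongDual ℂ E) : 0 ≤ muPN p lam :=
  le_trans (by positivity) (le_muPN hp lam (x := 0) (by simp))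

lemma sum_rpow_le_muPN_mul (hp : 0 < p) (lam : Fin n → StrongDual ℂ E) (x : E) :
    (∑ i, ‖lam i x‖ ^ p) ^ (1 / p) ≤ muPN p lam * ‖x‖ := by
  rcases eq_or_ne x 0 with rfl | hx
  · have h0 : ∀ i : Fin n, ‖lam i (0:E)‖ ^ p = 0 := fun i => by
      rw [map_zero, norm_zero, Real.zero_rpow hp.ne']
    rw [Finset.sum_congr rfl fun i _ => h0 i, Finset.sum_const_zero,
      Real.zero_rpow (one_div_ne_zero hp.ne'), norm_zero, mul_zero]
  · have hxn : 0 < ‖x‖ := norm_pos_iff.2 hx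
    set c : ℂ := ((‖x‖⁻¹ : ℝ) : ℂ) with hc
    have hcn : ‖c‖ = ‖x‖⁻¹ := by
      rw [hc, Complex.norm_real, Real.norm_eq_abs, abs_of_pos (by positivity)]
    have h1 : ‖c • x‖ ≤ 1 := by
      rw [norm_smul, hcn, inv_mul_cancel₀ hxn.ne']
    have h2 := le_muPN hp lam h1
    have h3 : ∀ i, ‖lam i (c • x)‖ = ‖x‖⁻¹ * ‖lam i x‖ := fun i => by
      rw [map_smul, norm_smul, hcn]
    rw [Finset.sum_congr rfl (fun i _ => by rw [h3 i]),
      rpow_sum_smul (by positivity) hp (fun i => norm_nonneg _)] at h2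
    calc (∑ i, ‖lam i x‖ ^ p) ^ (1/p)
        = ‖x‖ * (‖x‖⁻¹ * (∑ i, ‖lam i x‖ ^ p) ^ (1/p)) := by
          field_simp
      _ ≤ ‖x‖ * muPN p lam := mul_le_mul_of_nonneg_left h2 hxn.le
      _ = muPN p lam * ‖x‖ := mul_comm _ _

lemma norm_le_muPN (hp : 0 < p) (lam : Fin n → StrongDual ℂ E) (i : Fin n) :
    ‖lam i‖ ≤ muPN p lam := by
  refine (lam i).opNorm_le_bound (muPN_nonneg hp lam) fun x => ?_
  exact le_trans
    (single_le_rpow_sum hp (a := fun j => ‖lam j x‖) (fun j => norm_nonneg _) i)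
    (sum_rpow_le_muPN_mul hp lam x)

lemma muPN_zero_le_one (hp : 0 < p) : muPN p (0 : Fin n → StrongDual ℂ E) ≤ 1 := by
  apply csSup_le (muPN_set_nonempty _)
  rintro r ⟨x, hx, rfl⟩
  have h0 : ∀ i : Fin n, ‖(0 : Fin n → StrongDual ℂ E) i x‖ ^ p = 0 := fun i => by
    simp [Real.zero_rpow hp.ne']
  rw [Finset.sum_congr rfl fun i _ => h0 i, Finset.sum_const_zero,
    Real.zero_rpow (one_div_ne_zero hp.ne')]
  exact zero_le_one

lemma pqNorm_set_nonempty (hp : 0 < p) (x : Fin n → E) :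
    {r : ℝ | ∃ lam : Fin n → StrongDual ℂ E, muPN p lam ≤ 1 ∧
      r = (∑ i, ‖lam i (x i)‖ ^ q) ^ (1 / q)}.Nonempty :=
  ⟨_, 0, muPN_zero_le_one hp, rfl⟩

lemma pqNorm_set_bddAbove (hp : 0 < p) (hq : 0 < q) (x : Fin n → E) :
    BddAbove {r : ℝ | ∃ lam : Fin n → StrongDual ℂ E, muPN p lam ≤ 1 ∧
      r = (∑ i, ‖lam i (x i)‖ ^ q) ^ (1 / q)} := by
  refine ⟨(∑ i, ‖x i‖ ^ q) ^ (1 / q), ?_⟩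
  rintro r ⟨lam, hlam, rfl⟩
  refine rpow_sum_le_of_le hq (fun i => norm_nonneg _) fun i => ?_
  calc ‖lam i (x i)‖ ≤ ‖lam i‖ * ‖x i‖ := (lam i).le_opNorm _
    _ ≤ 1 * ‖x i‖ :=
      mul_le_mul_of_nonneg_right ((norm_le_muPN hp lam i).trans hlam) (norm_nonneg _)
    _ = ‖x i‖ := one_mul _

lemma le_pqNorm (hp : 0 < p) (hq : 0 < q) {lam : Fin n → StrongDual ℂ E} (x : Fin n → E)
    (hlam : muPN p lam ≤ 1) :
    (∑ i, ‖lam i (x i)‖ ^ q) ^ (1 / q) ≤ pqNorm p q x :=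
  le_csSup (pqNorm_set_bddAbove hp hq x) ⟨lam, hlam, rfl⟩

lemma pqNorm_nonneg (hp : 0 < p) (hq : 0 < q) (x : Fin n → E) : 0 ≤ pqNorm p q x :=
  le_trans (by positivity) (le_pqNorm hp hq (lam := 0) x (muPN_zero_le_one hp))

lemma dual_apply_sum_le (hp : 1 ≤ p) (lam : Fin n → StrongDual ℂ E)
    {Λ : StrongDual ℂ (StrongDual ℂ E)} (hΛ : ‖Λ‖ ≤ 1) :
    (∑ i, ‖Λ (lam i)‖ ^ p) ^ (1 / p) ≤ muPN p lam := by
  have hp0 : 0 < p := lt_of_lt_of_le one_pos hp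
  set c : Fin n → ℂ := fun i => Λ (lam i) with hc
  set Ssum : ℝ := ∑ i, ‖c i‖ ^ p with hSsum
  have hSnn : (0:ℝ) ≤ Ssum := Finset.sum_nonneg fun i _ => Real.rpow_nonneg (norm_nonneg _) p
  rcases eq_or_lt_of_le hSnn with hS0 | hSpos
  · rw [← hS0, Real.zero_rpow (one_div_ne_zero hp0.ne')]
    exact muPN_nonneg hp0 lam
  · set b : Fin n → ℂ := fun i => (starRingEnd ℂ) (c i) * ((‖c i‖ ^ (p - 2) : ℝ) : ℂ) with hb
    have f1 : ∀ i, b i * c i = ((‖c i‖ ^ p : ℝ) : ℂ) := by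
      intro i
      rcases eq_or_ne (c i) 0 with h0 | h0
      · rw [hb]; simp only [h0, map_zero, zero_mul, mul_zero, norm_zero,
          Real.zero_rpow hp0.ne', Complex.ofReal_zero]
      · have hcpos : 0 < ‖c i‖ := norm_pos_iff.2 h0
        rw [hb]
        calc (starRingEnd ℂ) (c i) * ((‖c i‖ ^ (p - 2) : ℝ) : ℂ) * c i
            = ((starRingEnd ℂ) (c i) * c i) * ((‖c i‖ ^ (p - 2) : ℝ) : ℂ) := by ring
          _ = ((‖c i‖ ^ (2:ℕ) : ℝ) : ℂ) * ((‖c i‖ ^ (p - 2) : ℝ) : ℂ) := by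
              rw [mul_comm ((starRingEnd ℂ) (c i)), Complex.mul_conj]
              norm_cast
              rw [Complex.normSq_eq_norm_sq]
          _ = ((‖c i‖ ^ p : ℝ) : ℂ) := by
              rw [← Complex.ofReal_mul]
              congr 1
              rw [← Real.rpow_natCast _ 2, ← Real.rpow_add hcpos]
              norm_num
    have f2 : ∀ i, ‖b i‖ = ‖c i‖ * ‖c i‖ ^ (p - 2) := by
      intro i
      rw [hb]
      simp only [norm_mul, Complex.norm_real]
      rw [RCLike.norm_conj, Real.norm_eq_abs, abs_of_nonneg (Real.rpow_nonneg (norm_nonneg _) _)]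
    set φ : StrongDual ℂ E := ∑ i, b i • lam i with hφ
    have f3 : Λ φ = (Ssum : ℂ) := by
      rw [hφ, map_sum, hSsum]
      push_cast
      exact Finset.sum_congr rfl fun i _ => by rw [map_smul, smul_eq_mul, f1 i]
    have f4k : ∀ a : Fin n → ℝ, (∀ i, 0 ≤ a i) →
        ∑ i, ‖b i‖ * a i ≤ Ssum ^ ((p-1)/p) * (∑ i, a i ^ p) ^ (1/p) := by
      intro a ha
      rcases eq_or_lt_of_le hp with hp1 | hp1
      · -- p = 1
        subst hp1
        have hb1 : ∀ i, ‖b i‖ ≤ 1 := by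
          intro i
          rw [f2 i]
          rcases eq_or_ne (c i) 0 with h0 | h0
          · simp [h0]
          · have hcpos : 0 < ‖c i‖ := norm_pos_iff.2 h0
            have he : (1:ℝ) - 2 = -1 := by norm_num
            rw [he, Real.rpow_neg_one, mul_inv_cancel₀ hcpos.ne']
        have h1 : ∑ i, ‖b i‖ * a i ≤ ∑ i, a i :=
          Finset.sum_le_sum fun i _ => mul_le_of_le_one_left (ha i) (hb1 i)
        have h2 : (∑ i, a i ^ (1:ℝ)) ^ (1/(1:ℝ)) = ∑ i, a i := by
          simp [Real.rpow_one]
        calc ∑ i, ‖b i‖ * a i ≤ ∑ i, a i := h1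
          _ = Ssum ^ ((1-1)/(1:ℝ)) * (∑ i, a i ^ (1:ℝ)) ^ (1/(1:ℝ)) := by
              rw [h2]; norm_num
      · -- 1 < p
        have hpq : (p/(p-1)).HolderConjugate p := (Real.HolderConjugate.conjExponent hp1).symm
        have hp1' : (0:ℝ) < p - 1 := by linarith
        have key := Real.inner_le_Lp_mul_Lq Finset.univ (fun i => ‖b i‖) a hpq
        have e1 : ∀ i, |‖b i‖| ^ (p/(p-1)) = ‖c i‖ ^ p := by
          intro i
          rw [abs_of_nonneg (norm_nonneg _), f2 i]
          rcases eq_or_ne (c i) 0 with h0 | h0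
          · rw [h0, norm_zero, zero_mul,
              Real.zero_rpow (div_pos hp0 hp1').ne', Real.zero_rpow hp0.ne']
          · have hcpos : 0 < ‖c i‖ := norm_pos_iff.2 h0
            have h2 : ‖c i‖ * ‖c i‖ ^ (p-2) = ‖c i‖ ^ (p-1) := by
              rw [show p - 1 = 1 + (p-2) by ring, Real.rpow_add hcpos, Real.rpow_one]
            rw [h2, ← Real.rpow_mul (norm_nonneg _)]
            congr 1
            field_simp
        have e2 : (∑ i, |‖b i‖| ^ (p/(p-1))) ^ (1/(p/(p-1))) = Ssum ^ ((p-1)/p) := by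
          rw [Finset.sum_congr rfl fun i _ => e1 i, ← hSsum, one_div_div]
        have e3 : ∀ i, |a i| ^ p = a i ^ p := fun i => by rw [abs_of_nonneg (ha i)]
        calc ∑ i, ‖b i‖ * a i
            ≤ (∑ i, |‖b i‖| ^ (p/(p-1))) ^ (1/(p/(p-1))) * (∑ i, |a i| ^ p) ^ (1/p) := key
          _ = Ssum ^ ((p-1)/p) * (∑ i, a i ^ p) ^ (1/p) := by
              rw [e2, Finset.sum_congr rfl fun i _ => e3 i]
    have f4 : ‖φ‖ ≤ Ssum ^ ((p-1)/p) * muPN p lam := by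
      refine φ.opNorm_le_bound
        (mul_nonneg (Real.rpow_nonneg hSnn _) (muPN_nonneg hp0 lam)) fun x => ?_
      have hφx : φ x = ∑ i, b i * lam i x := by
        rw [hφ]
        simp [ContinuousLinearMap.sum_apply, ContinuousLinearMap.smul_apply, smul_eq_mul]
      calc ‖φ x‖ ≤ ∑ i, ‖b i‖ * ‖lam i x‖ := by
            rw [hφx]
            exact (norm_sum_le _ _).trans
              (le_of_eq (Finset.sum_congr rfl fun i _ => norm_mul _ _))
        _ ≤ Ssum ^ ((p-1)/p) * (∑ i, ‖lam i x‖ ^ p) ^ (1/p) :=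
            f4k _ (fun i => norm_nonneg _)
        _ ≤ Ssum ^ ((p-1)/p) * (muPN p lam * ‖x‖) :=
            mul_le_mul_of_nonneg_left (sum_rpow_le_muPN_mul hp0 lam x)
              (Real.rpow_nonneg hSnn _)
        _ = Ssum ^ ((p-1)/p) * muPN p lam * ‖x‖ := by ring
    have f5 : Ssum ≤ Ssum ^ ((p-1)/p) * muPN p lam := by
      calc Ssum = ‖Λ φ‖ := by
            rw [f3, Complex.norm_real, Real.norm_eq_abs, abs_of_nonneg hSnn]
        _ ≤ ‖Λ‖ * ‖φ‖ := Λ.le_opNorm φ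
        _ ≤ 1 * (Ssum ^ ((p-1)/p) * muPN p lam) :=
            mul_le_mul hΛ f4 (norm_nonneg _) zero_le_one
        _ = _ := one_mul _
    have hpow : (0:ℝ) < Ssum ^ ((p-1)/p) := Real.rpow_pos_of_pos hSpos _
    have heq : Ssum ^ (1/p) = Ssum / Ssum ^ ((p-1)/p) := by
      rw [eq_div_iff hpow.ne', ← Real.rpow_add hSpos,
        show 1/p + (p-1)/p = 1 by field_simp; ring, Real.rpow_one]
    rw [heq, div_le_iff₀ hpow]
    calc Ssum ≤ Ssum ^ ((p-1)/p) * muPN p lam := f5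
      _ = muPN p lam * Ssum ^ ((p-1)/p) := mul_comm _ _

lemma muDualPN_eq_muPN (hp : 1 ≤ p) (lam : Fin n → StrongDual ℂ E) :
    muDualPN p lam = muPN p lam := by
  have hp0 : 0 < p := lt_of_lt_of_le one_pos hp
  apply le_antisymm
  · have hne : {r : ℝ | ∃ Λ : StrongDual ℂ (StrongDual ℂ E), ‖Λ‖ ≤ 1 ∧
        r = (∑ i, ‖Λ (lam i)‖ ^ p) ^ (1 / p)}.Nonempty := ⟨_, (0 : StrongDual ℂ (StrongDual ℂ E)), (by rw [ContinuousLinearMap.opNorm_zero]; exact zero_le_one), rfl⟩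
    refine csSup_le hne ?_
    rintro r ⟨Λ, hΛ, rfl⟩
    exact dual_apply_sum_le hp lam hΛ
  · apply csSup_le (muPN_set_nonempty lam)
    rintro r ⟨x, hx, rfl⟩
    have hbdd : BddAbove {r : ℝ | ∃ Λ : StrongDual ℂ (StrongDual ℂ E), ‖Λ‖ ≤ 1 ∧
        r = (∑ i, ‖Λ (lam i)‖ ^ p) ^ (1 / p)} := by
      refine ⟨(∑ i, ‖lam i‖ ^ p) ^ (1 / p), ?_⟩
      rintro r ⟨Λ, hΛ, rfl⟩
      exact rpow_sum_le_of_le hp0 (fun i => norm_nonneg _)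
        (fun i => le_trans (Λ.le_opNorm _) (mul_le_of_le_one_left (norm_nonneg _) hΛ))
    refine le_csSup hbdd ⟨inclusionInDoubleDual ℂ E x,
      le_trans (double_dual_bound ℂ E x) hx, ?_⟩
    simp only [dual_def]

end helpers

section opchar

lemma apply_single_le (T : lp (fun _ : ℕ => ℂ) 1 →L[ℂ] E) (lam : StrongDual ℂ E) (k : ℕ) :
    ‖lam (T (lp.single 1 k 1))‖ ≤ ‖lam.comp T‖ := by
  have h1 : ‖(lp.single 1 k 1 : lp (fun _ : ℕ => ℂ) 1)‖ = 1 := by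
    have := lp.norm_single (α := ℕ) (E := fun _ : ℕ => ℂ) (p := 1) (by norm_num)
      k (1:ℂ)
    simpa using this
  calc ‖lam (T (lp.single 1 k 1))‖ = ‖(lam.comp T) (lp.single 1 k 1)‖ := rfl
    _ ≤ ‖lam.comp T‖ * ‖(lp.single 1 k 1 : lp (fun _ : ℕ => ℂ) 1)‖ := (lam.comp T).le_opNorm _
    _ = ‖lam.comp T‖ := by rw [h1, mul_one]

lemma opNorm_comp_le_of_forall (T : lp (fun _ : ℕ => ℂ) 1 →L[ℂ] E) (lam : StrongDual ℂ E)
    {M : ℝ} (hM : 0 ≤ M) (h : ∀ k, ‖lam (T (lp.single 1 k 1))‖ ≤ M) :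
    ‖lam.comp T‖ ≤ M := by
  refine (lam.comp T).opNorm_le_bound hM fun f => ?_
  have hs : HasSum (fun k => lp.single 1 k (f k)) f := lp.hasSum_single (by norm_num) f
  have hs2 : HasSum (fun k => (lam.comp T) (lp.single 1 k (f k))) ((lam.comp T) f) :=
    (lam.comp T).hasSum hs
  have hterm : ∀ k, ‖(lam.comp T) (lp.single 1 k (f k))‖ ≤ ‖f k‖ * M := by
    intro k
    have : lp.single 1 k (f k) = f k • (lp.single 1 k 1 : lp (fun _ : ℕ => ℂ) 1) := by
      rw [← lp.single_smul, smul_eq_mul, mul_one]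
    rw [this, map_smul, norm_smul]
    exact mul_le_mul_of_nonneg_left (h k) (norm_nonneg _)
  have hfsum : Summable fun k => ‖f k‖ := by
    have := Memℓp.summable (by norm_num) (lp.memℓp f)
    simpa using this
  have hsum2 : Summable fun k => ‖(lam.comp T) (lp.single 1 k (f k))‖ :=
    Summable.of_nonneg_of_le (fun k => norm_nonneg _) hterm (hfsum.mul_right M)
  calc ‖(lam.comp T) f‖ = ‖∑' k, (lam.comp T) (lp.single 1 k (f k))‖ := by
        rw [hs2.tsum_eq]
    _ ≤ ∑' k, ‖(lam.comp T) (lp.single 1 k (f k))‖ := norm_tsum_le_tsum_norm hsum2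
    _ ≤ ∑' k, ‖f k‖ * M := Summable.tsum_le_tsum hterm hsum2 (hfsum.mul_right M)
    _ = (∑' k, ‖f k‖) * M := by rw [tsum_mul_right]
    _ = M * ‖f‖ := by
        rw [mul_comm]
        congr 1
        have := lp.norm_eq_tsum_rpow (p := 1) (by norm_num) f
        simpa using this.symm

end opchar

section core

variable {p q : ℝ}

lemma summing_of_multibound (hp : 1 ≤ p) (hq : 1 ≤ q)
    (T : lp (fun _ : ℕ => ℂ) 1 →L[ℂ] E) {C : ℝ} (hC : 0 ≤ C)
    (hbound : ∀ (n : ℕ) (x : Fin n → E),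
      (∀ i, ∃ k : ℕ, x i = T (lp.single 1 k 1)) → pqNorm p q x ≤ C) :
    ∀ (n : ℕ) (lam : Fin n → StrongDual ℂ E),
      (∑ i, ‖(lam i).comp T‖ ^ q) ^ (1/q) ≤ C * muPN p lam := by
  have hp0 : 0 < p := lt_of_lt_of_le one_pos hp
  have hq0 : 0 < q := lt_of_lt_of_le one_pos hq
  intro n lam
  rcases eq_or_lt_of_le (muPN_nonneg hp0 lam) with hm0 | hm
  · have hzero : ∀ i : Fin n, ‖(lam i).comp T‖ ^ q = 0 := by
      intro i
      have h1 : ‖lam i‖ ≤ 0 := (norm_le_muPN hp0 lam i).trans (le_of_eq hm0.symm)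
      rw [norm_le_zero_iff.1 h1, ContinuousLinearMap.zero_comp, norm_zero,
        Real.zero_rpow hq0.ne']
    rw [Finset.sum_congr rfl fun i _ => hzero i, Finset.sum_const_zero,
      Real.zero_rpow (one_div_ne_zero hq0.ne'), ← hm0, mul_zero]
  · set m := muPN p lam with hmdef
    set lam' : Fin n → StrongDual ℂ E := fun i => ((m⁻¹ : ℝ) : ℂ) • lam i with hlam'
    have hmc : ‖((m⁻¹:ℝ):ℂ)‖ = m⁻¹ := by
      rw [Complex.norm_real, Real.norm_eq_abs, abs_of_pos (inv_pos.2 hm)]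
    have hnorm' : ∀ (i : Fin n) (y : E), ‖lam' i y‖ = m⁻¹ * ‖lam i y‖ := by
      intro i y
      rw [hlam']
      simp only [ContinuousLinearMap.smul_apply]
      rw [norm_smul, hmc]
    have hmu' : muPN p lam' ≤ 1 := by
      apply csSup_le (muPN_set_nonempty _)
      rintro r ⟨x, hx, rfl⟩
      rw [Finset.sum_congr rfl fun i _ => by rw [hnorm' i x],
        rpow_sum_smul (inv_nonneg.2 hm.le) hp0 (fun i => norm_nonneg _)]
      calc m⁻¹ * (∑ i, ‖lam i x‖ ^ p) ^ (1/p) ≤ m⁻¹ * m :=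
            mul_le_mul_of_nonneg_left (le_muPN hp0 lam hx) (inv_nonneg.2 hm.le)
        _ = 1 := inv_mul_cancel₀ hm.ne'
    have hcompnorm : ∀ i : Fin n, ‖(lam i).comp T‖ = m * ‖(lam' i).comp T‖ := by
      intro i
      have h1 : (lam' i).comp T = ((m⁻¹:ℝ):ℂ) • ((lam i).comp T) := by
        rw [hlam']
        exact ContinuousLinearMap.smul_comp _ _ _
      rw [h1, norm_smul ((m⁻¹:ℝ):ℂ) ((lam i).comp T), hmc, ← mul_assoc,
        mul_inv_cancel₀ hm.ne', one_mul]
    suffices hkey : (∑ i, ‖(lam' i).comp T‖ ^ q) ^ (1/q) ≤ C by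
      calc (∑ i, ‖(lam i).comp T‖ ^ q) ^ (1/q)
          = (∑ i, (m * ‖(lam' i).comp T‖) ^ q) ^ (1/q) := by
            rw [Finset.sum_congr rfl fun i _ => by rw [hcompnorm i]]
        _ = m * (∑ i, ‖(lam' i).comp T‖ ^ q) ^ (1/q) :=
            rpow_sum_smul hm.le hq0 (fun i => norm_nonneg _)
        _ ≤ m * C := mul_le_mul_of_nonneg_left hkey hm.le
        _ = C * m := mul_comm _ _
    have hsum_le : ∑ i, ‖(lam' i).comp T‖ ^ q ≤ C ^ q := by
      refine le_of_forall_pos_le_add fun ε hε => ?_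
      have hchoice : ∀ i : Fin n, ∃ k : ℕ,
          ‖(lam' i).comp T‖ ^ q ≤ ‖lam' i (T (lp.single 1 k 1))‖ ^ q + ε / n := by
        intro i
        by_contra hcon
        push_neg at hcon
        set B := ‖(lam' i).comp T‖ with hB
        have hn : 0 < (n:ℝ) := by
          have := i.pos
          exact_mod_cast this
        have ht' : ∀ k, ‖lam' i (T (lp.single 1 k 1))‖ ^ q ≤ B ^ q - ε/n := by
          intro k
          have := hcon k
          linarith
        have ht0 : (0:ℝ) ≤ B ^ q - ε/n :=
          le_trans (Real.rpow_nonneg (norm_nonneg _) q) (ht' 0)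
        have hk : ∀ k, ‖lam' i (T (lp.single 1 k 1))‖ ≤ (B^q - ε/n) ^ (1/q) := by
          intro k
          calc ‖lam' i (T (lp.single 1 k 1))‖
              = (‖lam' i (T (lp.single 1 k 1))‖ ^ q) ^ (1/q) :=
                (rp1 (norm_nonneg _) hq0.ne').symm
            _ ≤ (B^q - ε/n)^(1/q) :=
                Real.rpow_le_rpow (Real.rpow_nonneg (norm_nonneg _) q) (ht' k)
                  (by positivity)
        have hBle : B ≤ (B^q - ε/n)^(1/q) :=
          opNorm_comp_le_of_forall T (lam' i) (Real.rpow_nonneg ht0 _) hk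
        have h2 : B ^ q ≤ B^q - ε/n := by
          calc B ^ q ≤ ((B^q - ε/n)^(1/q))^q :=
                Real.rpow_le_rpow (norm_nonneg _) hBle hq0.le
            _ = B^q - ε/n := rp2 ht0 hq0.ne'
        have h3 : 0 < ε / n := div_pos hε hn
        linarith
      choose kk hkk using hchoice
      set x : Fin n → E := fun i => T (lp.single 1 (kk i) 1) with hx
      have hmem : ∀ i, ∃ k₀ : ℕ, x i = T (lp.single 1 k₀ 1) := fun i => ⟨kk i, rfl⟩
      have h1 : (∑ i, ‖lam' i (x i)‖ ^ q) ^ (1/q) ≤ C :=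
        le_trans (le_pqNorm hp0 hq0 x hmu') (hbound n x hmem)
      have hsnn : (0:ℝ) ≤ ∑ i, ‖lam' i (x i)‖ ^ q :=
        Finset.sum_nonneg fun i _ => Real.rpow_nonneg (norm_nonneg _) q
      have h2 : ∑ i, ‖lam' i (x i)‖ ^ q ≤ C ^ q := by
        calc ∑ i, ‖lam' i (x i)‖ ^ q
            = ((∑ i, ‖lam' i (x i)‖ ^ q) ^ (1/q)) ^ q := (rp2 hsnn hq0.ne').symm
          _ ≤ C ^ q := Real.rpow_le_rpow (Real.rpow_nonneg hsnn _) h1 hq0.le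
      have h4 : (n:ℝ) * (ε/n) ≤ ε := by
        rcases Nat.eq_zero_or_pos n with rfl | hn
        · simp [hε.le]
        · rw [mul_div_cancel₀]
          exact_mod_cast hn.ne'
      calc ∑ i, ‖(lam' i).comp T‖ ^ q
          ≤ ∑ i, (‖lam' i (x i)‖ ^ q + ε/n) := Finset.sum_le_sum fun i _ => hkk i
        _ = (∑ i, ‖lam' i (x i)‖ ^ q) + n * (ε/n) := by
            rw [Finset.sum_add_distrib, Finset.sum_const, Finset.card_univ,
              Fintype.card_fin, nsmul_eq_mul]
        _ ≤ C^q + ε := add_le_add h2 h4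
    have hsnn2 : (0:ℝ) ≤ ∑ i, ‖(lam' i).comp T‖ ^ q :=
      Finset.sum_nonneg fun i _ => Real.rpow_nonneg (norm_nonneg _) q
    calc (∑ i, ‖(lam' i).comp T‖ ^ q) ^ (1/q)
        ≤ (C^q)^(1/q) := Real.rpow_le_rpow hsnn2 hsum_le (by positivity)
      _ = C := rp1 hC hq0.ne'

lemma multibound_of_summing (hp : 1 ≤ p) (hq : 1 ≤ q)
    (T : lp (fun _ : ℕ => ℂ) 1 →L[ℂ] E) {C : ℝ} (hC : 0 ≤ C)
    (hsum : ∀ (n : ℕ) (lam : Fin n → StrongDual ℂ E),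
      (∑ i, ‖(lam i).comp T‖ ^ q) ^ (1/q) ≤ C * muPN p lam) :
    ∀ (n : ℕ) (x : Fin n → E),
      (∀ i, ∃ k : ℕ, x i = T (lp.single 1 k 1)) → pqNorm p q x ≤ C := by
  have hp0 : 0 < p := lt_of_lt_of_le one_pos hp
  have hq0 : 0 < q := lt_of_lt_of_le one_pos hq
  intro n x hx
  apply csSup_le (pqNorm_set_nonempty hp0 x)
  rintro r ⟨lam, hlam, rfl⟩
  calc (∑ i, ‖lam i (x i)‖ ^ q) ^ (1/q)
      ≤ (∑ i, ‖(lam i).comp T‖ ^ q) ^ (1/q) :=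
        rpow_sum_le_of_le hq0 (fun i => norm_nonneg _) (fun i => by
          obtain ⟨k, hk⟩ := hx i
          rw [hk]
          exact apply_single_le T (lam i) k)
    _ ≤ C * muPN p lam := hsum n lam
    _ ≤ C * 1 := mul_le_mul_of_nonneg_left hlam hC
    _ = C := mul_one C

end core

/-- for `1 ≤ p ≤ q < ∞` and `T ∈ B(ℓ¹, E)`, the set `{T δ_k : k ∈ ℕ}` is
`(p,q)`-multi-bounded in `E` if and only if the adjoint `T' : E' → ℓ^∞ = (ℓ¹)'` is
`(q,p)`-summing; in that case `mb_{p,q}({T δ_k}) = π_{q,p}(T')`. -/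
theorem multibound_eq_summing_norm
    [CompleteSpace E] (p q : ℝ) (hp : 1 ≤ p) (hpq : p ≤ q)
    (T : lp (fun _ : ℕ => ℂ) 1 →L[ℂ] E) :
    ((∃ C : ℝ, ∀ (n : ℕ) (x : Fin n → E),
        (∀ i, x i ∈ {y : E | ∃ k : ℕ, y = T (lp.single 1 k 1)}) → pqNorm p q x ≤ C)
      ↔ (∃ C : ℝ, 0 ≤ C ∧ ∀ (n : ℕ) (lam : Fin n → StrongDual ℂ E),
          (∑ i, ‖(lam i).comp T‖ ^ q) ^ (1 / q) ≤ C * muDualPN p lam)) ∧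
    ((∃ C : ℝ, ∀ (n : ℕ) (x : Fin n → E),
        (∀ i, x i ∈ {y : E | ∃ k : ℕ, y = T (lp.single 1 k 1)}) → pqNorm p q x ≤ C) →
      sSup {r : ℝ | ∃ (n : ℕ) (x : Fin n → E),
          (∀ i, x i ∈ {y : E | ∃ k : ℕ, y = T (lp.single 1 k 1)}) ∧ r = pqNorm p q x}
        = sInf {C : ℝ | 0 ≤ C ∧ ∀ (n : ℕ) (lam : Fin n → StrongDual ℂ E),
            (∑ i, ‖(lam i).comp T‖ ^ q) ^ (1 / q) ≤ C * muDualPN p lam}) := by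
  have hq : 1 ≤ q := le_trans hp hpq
  have hp0 : 0 < p := lt_of_lt_of_le one_pos hp
  have hq0 : 0 < q := lt_of_lt_of_le one_pos hq
  constructor
  · constructor
    · rintro ⟨C, hC⟩
      refine ⟨max C 0, le_max_right _ _, fun n lam => ?_⟩
      rw [muDualPN_eq_muPN hp]
      exact summing_of_multibound hp hq T (le_max_right C 0)
        (fun n x hx => (hC n x hx).trans (le_max_left C 0)) n lam
    · rintro ⟨C, hC0, hC⟩
      refine ⟨C, fun n x hx => ?_⟩
      refine multibound_of_summing hp hq T hC0 (fun n lam => ?_) n x hx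
      rw [← muDualPN_eq_muPN hp]
      exact hC n lam
  · rintro ⟨C₀, hC₀⟩
    set X := {r : ℝ | ∃ (n : ℕ) (x : Fin n → E),
        (∀ i, x i ∈ {y : E | ∃ k : ℕ, y = T (lp.single 1 k 1)}) ∧ r = pqNorm p q x} with hX
    have hXne : X.Nonempty :=
      ⟨pqNorm p q (fun _ : Fin 0 => (0:E)), 0, (fun _ => 0), fun i => i.elim0, rfl⟩
    have hXbdd : BddAbove X := by
      refine ⟨max C₀ 0, ?_⟩
      rintro r ⟨n, x, hxx, rfl⟩
      exact (hC₀ n x hxx).trans (le_max_left _ _)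
    set S := sSup X with hS
    have hS0 : 0 ≤ S := by
      obtain ⟨r, n, x, hxx, rfl⟩ := hXne
      exact le_trans (pqNorm_nonneg hp0 hq0 x) (le_csSup hXbdd ⟨n, x, hxx, rfl⟩)
    have hSbound : ∀ (n : ℕ) (x : Fin n → E),
        (∀ i, ∃ k : ℕ, x i = T (lp.single 1 k 1)) → pqNorm p q x ≤ S :=
      fun n x h => le_csSup hXbdd ⟨n, x, h, rfl⟩
    have hSY := summing_of_multibound hp hq T hS0 hSbound
    apply le_antisymm
    · refine le_csInf ⟨S, hS0, fun n lam => by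
        rw [muDualPN_eq_muPN hp]; exact hSY n lam⟩ ?_
      rintro C ⟨hC0c, hCs⟩
      refine csSup_le hXne ?_
      rintro r ⟨n, x, hxx, rfl⟩
      refine multibound_of_summing hp hq T hC0c (fun n lam => ?_) n x hxx
      rw [← muDualPN_eq_muPN hp]
      exact hCs n lam
    · exact csInf_le ⟨0, fun C hCm => hCm.1⟩
        ⟨hS0, fun n lam => by rw [muDualPN_eq_muPN hp]; exact hSY n lam⟩
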